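/- Let A be the orbit through p₀ = (z₁,z₂,z₃,z₄) ∈ S⁷ of the irreducible SU(2)-action, with tangent vectors E₁* = (√3z₄, −√3z₃, √3z₂−2z₄, −√3z₁+2z₃), E₂* = (√3iz₄, √3iz₃, √3iz₂+2iz₄, √3iz₁+2iz₃), E₃* = (3iz₁, −3iz₂, −iz₃, iz₄). If E₁*, E₂*, E₃* are mutually orthogonal at p₀ (w.r.t. the real inner product on ℂ⁴), |E₁*|² = |E₂*|², and additionally z₁z̄₄ − z̄₂z₃ = 0 and z₁z̄₃ + z̄₂z₄ = 0, then either z₁ = z₂ = 0 or z₃ = z₄ = 0. -/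
import Mathlib


open Complex

/-- The real inner product Re⟨u,v⟩ on ℂ⁴ ≅ ℝ⁸. -/
noncomputable def reInner (u v : Fin 4 → ℂ) : ℝ :=
  (∑ i, (starRingEnd ℂ) (u i) * v i).re

/- STATEMENT 15: for the irreducible SU(2)-orbit through p₀ = (z₁,z₂,z₃,z₄) ∈ S⁷ with
tangent vectors E₁*, E₂*, E₃* as displayed, if E₁*, E₂*, E₃* are mutually orthogonal,
|E₁*|² = |E₂*|², and z₁z̄₄ − z̄₂z₃ = 0 and z₁z̄₃ + z̄₂z₄ = 0, then either
z₁ = z₂ = 0 or z₃ = z₄ = 0. -/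
theorem SU2_orbit_case2 (z₁ z₂ z₃ z₄ : ℂ)
    (hnorm : normSq z₁ + normSq z₂ + normSq z₃ + normSq z₄ = 1) :
    let c := starRingEnd ℂ
    let r3 : ℂ := (Real.sqrt 3 : ℝ)
    let E₁ : Fin 4 → ℂ := ![r3 * z₄, -(r3 * z₃), r3 * z₂ - 2 * z₄, -(r3 * z₁) + 2 * z₃]
    let E₂ : Fin 4 → ℂ := ![r3 * I * z₄, r3 * I * z₃,
      r3 * I * z₂ + 2 * I * z₄, r3 * I * z₁ + 2 * I * z₃]
    let E₃ : Fin 4 → ℂ := ![3 * I * z₁, -(3 * I * z₂), -(I * z₃), I * z₄]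
    reInner E₁ E₂ = 0 → reInner E₁ E₃ = 0 → reInner E₂ E₃ = 0 →
    reInner E₁ E₁ = reInner E₂ E₂ →
    z₁ * c z₄ - c z₂ * z₃ = 0 → z₁ * c z₃ + c z₂ * z₄ = 0 →
    (z₁ = 0 ∧ z₂ = 0) ∨ (z₃ = 0 ∧ z₄ = 0) := by
  intro c r3 E₁ E₂ E₃ _ _ _ _ h5 h6
  have key : z₂ * c z₂ * (z₃ * c z₃ + z₄ * c z₄) = 0 := by
    linear_combination (z₂ * c z₄) * h6 - (z₂ * c z₃) * h5
  rw [Complex.mul_conj, Complex.mul_conj, Complex.mul_conj] at key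
  have key' : (normSq z₂ : ℂ) * ((normSq z₃ : ℂ) + (normSq z₄ : ℂ)) = 0 := by
    simpa [Complex.sq_norm] using key
  rcases mul_eq_zero.mp key' with h | h
  · have hz2 : z₂ = 0 := normSq_eq_zero.mp (by exact_mod_cast h)
    by_cases hz1 : z₁ = 0
    · exact Or.inl ⟨hz1, hz2⟩
    · right
      rw [hz2] at h5 h6
      simp only [map_zero, zero_mul, sub_zero, add_zero] at h5 h6
      constructor
      · have := (mul_eq_zero.mp h6).resolve_left hz1
        simpa using congrArg (starRingEnd ℂ) this
      · have := (mul_eq_zero.mp h5).resolve_left hz1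
        simpa using congrArg (starRingEnd ℂ) this
  · have h' : normSq z₃ + normSq z₄ = 0 := by exact_mod_cast h
    have h3 : normSq z₃ = 0 := le_antisymm (by nlinarith [normSq_nonneg z₄]) (normSq_nonneg z₃)
    have h4 : normSq z₄ = 0 := by linarith
    exact Or.inr ⟨normSq_eq_zero.mp h3, normSq_eq_zero.mp h4⟩
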